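/- Let K be a commutative field and A an invertible n×n X-form matrix over K. Then the inverse A⁻¹ is an X-form matrix. -/
import Mathlib

/-- An `n × n` matrix is an X-form matrix if all its entries off the diagonal and the
anti-diagonal vanish. -/
def IsXForm {K : Type*} [Field K] {n : ℕ} (A : Matrix (Fin n) (Fin n) K) : Prop :=
  ∀ i j : Fin n, (i : ℕ) ≠ (j : ℕ) → (i : ℕ) + (j : ℕ) ≠ n - 1 → A i j = 0

lemma isXForm_mul {K : Type*} [Field K] {n : ℕ} {A B : Matrix (Fin n) (Fin n) K}
    (hA : IsXForm A) (hB : IsXForm B) : IsXForm (A * B) := by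
  intro i j hij hsum
  have : ∀ k : Fin n, A i k * B k j = 0 := by
    intro k
    by_cases h1 : (i : ℕ) = (k : ℕ)
    · by_cases h2 : (k : ℕ) = (j : ℕ)
      · exact absurd (h1.trans h2) hij
      · by_cases h3 : (k : ℕ) + (j : ℕ) = n - 1
        · exact absurd (h1 ▸ h3) hsum
        · rw [hB k j h2 h3, mul_zero]
    · by_cases h4 : (i : ℕ) + (k : ℕ) = n - 1
      · by_cases h2 : (k : ℕ) = (j : ℕ)
        · exact absurd (h2 ▸ h4) hsum
        · by_cases h3 : (k : ℕ) + (j : ℕ) = n - 1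
          · exact absurd (by omega : (i : ℕ) = j) hij
          · rw [hB k j h2 h3, mul_zero]
      · rw [hA i k h1 h4, zero_mul]
  simp only [Matrix.mul_apply]
  exact Finset.sum_eq_zero fun k _ => this k

/-- The subalgebra of X-form matrices. -/
def xFormSubalgebra (K : Type*) [Field K] (n : ℕ) :
    Subalgebra K (Matrix (Fin n) (Fin n) K) where
  carrier := {A | IsXForm A}
  mul_mem' := isXForm_mul
  add_mem' := by
    intro a b ha hb i j hij hsum
    simp [Matrix.add_apply, ha i j hij hsum, hb i j hij hsum]
  algebraMap_mem' := by
    intro c i j hij hsum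
    have : i ≠ j := fun h => hij (congrArg Fin.val h)
    simp [Matrix.algebraMap_matrix_apply, this]

/-- The inverse of an invertible X-form matrix is an X-form matrix. -/
theorem isXForm_inv {K : Type*} [Field K] {n : ℕ} (A : Matrix (Fin n) (Fin n) K)
    (hA : IsXForm A) (hu : IsUnit A) : IsXForm A⁻¹ := by
  set p := A.charpoly with hp
  have haev : Polynomial.aeval A p = 0 := A.aeval_self_charpoly
  have hdet : IsUnit A.det := (Matrix.isUnit_iff_isUnit_det A).mp hu
  have hc0 : p.coeff 0 ≠ 0 := by
    intro h
    have := A.det_eq_sign_charpoly_coeff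
    rw [← hp, h, mul_zero] at this
    exact hdet.ne_zero this
  have comm : ∀ q : Polynomial K, A * Polynomial.aeval A q = Polynomial.aeval A q * A := by
    intro q
    have h1 : A * Polynomial.aeval A q = Polynomial.aeval A (Polynomial.X * q) := by
      rw [map_mul, Polynomial.aeval_X]
    have h2 : Polynomial.aeval A q * A = Polynomial.aeval A (q * Polynomial.X) := by
      rw [map_mul, Polynomial.aeval_X]
    rw [h1, h2, mul_comm q]
  have key : A * (-(p.coeff 0)⁻¹ • Polynomial.aeval A p.divX) = 1 := by
    have hsplit : p.divX * Polynomial.X + Polynomial.C (p.coeff 0) = p :=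
      Polynomial.divX_mul_X_add p
    have h := congrArg (Polynomial.aeval A) hsplit
    rw [map_add, map_mul, Polynomial.aeval_X, Polynomial.aeval_C, haev] at h
    have hAc : Polynomial.aeval A p.divX * A = -((algebraMap K (Matrix (Fin n) (Fin n) K)) (p.coeff 0)) := by
      exact eq_neg_of_add_eq_zero_left h
    rw [mul_smul_comm, comm, hAc, Algebra.algebraMap_eq_smul_one, smul_neg, smul_smul,
      neg_mul, neg_smul, neg_neg, inv_mul_cancel₀ hc0, one_smul]
  have hinv : A⁻¹ = -(p.coeff 0)⁻¹ • Polynomial.aeval A p.divX :=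
    Matrix.inv_eq_right_inv key
  have hmem : A ∈ xFormSubalgebra K n := hA
  have hadj : Algebra.adjoin K {A} ≤ xFormSubalgebra K n :=
    Algebra.adjoin_le (Set.singleton_subset_iff.mpr hmem)
  have : A⁻¹ ∈ xFormSubalgebra K n := by
    rw [hinv]
    exact Subalgebra.smul_mem _ (hadj (Polynomial.aeval_mem_adjoin_singleton K A)) _
  exact this
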